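/- arXiv:2410.20786 — 2 statements merged into one kernel-verified Lean document; each statement's English description precedes it below -/
import Mathlib

section
/- Adversarial update reward-budget bound (Theorem 4.2, reward part): in a finite discounted MDP, let δ > 0, ε_R ≥ 0, and let R : S → A → ℝ be a reward signal. Suppose a min-cost stage π_0, …, π_{n2} satisfies for every i < n2: (π_i s a = 0 → π_{i+1} s a = 0), D̄_KL(π_{i+1}‖π_i) ≤ δ, J_R(π_i) + (1/(1−γ)) · 𝔸_R(π_i, π_{i+1}) ≥ J_R(π_0), and ε_R(π_i, π_{i+1}) ≤ ε_R; and a subsequent max-reward stage σ_0 = π_{n2}, σ_1, …, σ_{n1} satisfies for every i < n1: (σ_i s a = 0 → σ_{i+1} s a = 0), D̄_KL(σ_{i+1}‖σ_i) ≤ δ, 𝔸_R(σ_i, σ_{i+1}) ≥ 0, and ε_R(σ_i, σ_{i+1}) ≤ ε_R. Then J_R(σ_{n1}) − J_R(π_0) ≥ − (√(2δ) · γ / (1−γ)²) · (n1 + n2) · ε_R. -/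
open Real BigOperators

/-- Induced transition matrix of policy `pol`: `P_pol(s,s') = ∑ a, pol s a * P s a s'`. -/
noncomputable def transMat {S A : Type*} [Fintype A] (P : S → A → S → ℝ)
    (pol : S → A → ℝ) : Matrix S S ℝ :=
  fun s s' => ∑ a, pol s a * P s a s'

/-- Discounted state visitation distribution
`d_pol(s) = (1-γ) ∑ₜ γ^t ∑_{s0} ρ0 s0 * (P_pol^t)(s0,s)`. -/
noncomputable def dVisit {S A : Type*} [Fintype S] [DecidableEq S] [Fintype A]
    (P : S → A → S → ℝ) (γ : ℝ) (ρ0 : S → ℝ) (pol : S → A → ℝ) (s : S) : ℝ :=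
  (1 - γ) * ∑' t : ℕ, γ ^ t * ∑ s0, ρ0 s0 * (transMat P pol ^ t) s0 s

/-- Value function of signal `F` under policy `pol`. -/
noncomputable def Vfun {S A : Type*} [Fintype S] [DecidableEq S] [Fintype A]
    (P : S → A → S → ℝ) (γ : ℝ) (F : S → A → ℝ) (pol : S → A → ℝ) (s : S) : ℝ :=
  ∑' t : ℕ, γ ^ t * ∑ s', (transMat P pol ^ t) s s' * ∑ a, pol s' a * F s' a

/-- Return `J_F(pol) = ∑ s, ρ0 s * V_F^pol(s)`. -/
noncomputable def Jret {S A : Type*} [Fintype S] [DecidableEq S] [Fintype A]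
    (P : S → A → S → ℝ) (γ : ℝ) (ρ0 : S → ℝ) (F : S → A → ℝ) (pol : S → A → ℝ) : ℝ :=
  ∑ s, ρ0 s * Vfun P γ F pol s

/-- Action-value function `Q_F^pol(s,a) = F s a + γ ∑_{s'} P s a s' * V_F^pol(s')`. -/
noncomputable def Qfun {S A : Type*} [Fintype S] [DecidableEq S] [Fintype A]
    (P : S → A → S → ℝ) (γ : ℝ) (F : S → A → ℝ) (pol : S → A → ℝ) (s : S) (a : A) : ℝ :=
  F s a + γ * ∑ s', P s a s' * Vfun P γ F pol s'

/-- Advantage function `A_F^pol(s,a) = Q_F^pol(s,a) - V_F^pol(s)`. -/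
noncomputable def Adv {S A : Type*} [Fintype S] [DecidableEq S] [Fintype A]
    (P : S → A → S → ℝ) (γ : ℝ) (F : S → A → ℝ) (pol : S → A → ℝ) (s : S) (a : A) : ℝ :=
  Qfun P γ F pol s a - Vfun P γ F pol s

/-- Expected surrogate advantage
`𝔸_F(pol,pol') = ∑ s, d_pol(s) ∑ a, pol' s a * A_F^pol(s,a)`. -/
noncomputable def surrAdv {S A : Type*} [Fintype S] [DecidableEq S] [Fintype A]
    (P : S → A → S → ℝ) (γ : ℝ) (ρ0 : S → ℝ) (F : S → A → ℝ)
    (pol pol' : S → A → ℝ) : ℝ :=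
  ∑ s, dVisit P γ ρ0 pol s * ∑ a, pol' s a * Adv P γ F pol s a

/-- `ε_F(pol,pol') = max_s |∑ a, pol' s a * A_F^pol(s,a)|`. -/
noncomputable def epsAdv {S A : Type*} [Fintype S] [DecidableEq S] [Fintype A] [Nonempty S]
    (P : S → A → S → ℝ) (γ : ℝ) (F : S → A → ℝ) (pol pol' : S → A → ℝ) : ℝ :=
  Finset.univ.sup' Finset.univ_nonempty fun s => |∑ a, pol' s a * Adv P γ F pol s a|

/-- Per-state KL divergence `KL(pol'‖pol)(s) = ∑ a, pol' s a * log (pol' s a / pol s a)`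
(with the convention `0 * log 0 = 0`, automatic since `Real.log 0 = 0`). -/
noncomputable def klState {S A : Type*} [Fintype A] (pol' pol : S → A → ℝ) (s : S) : ℝ :=
  ∑ a, pol' s a * Real.log (pol' s a / pol s a)

/-- Averaged KL divergence `D̄_KL(pol'‖pol) = ∑ s, d_pol(s) * KL(pol'‖pol)(s)`. -/
noncomputable def avgKL {S A : Type*} [Fintype S] [DecidableEq S] [Fintype A]
    (P : S → A → S → ℝ) (γ : ℝ) (ρ0 : S → ℝ) (pol' pol : S → A → ℝ) : ℝ :=
  ∑ s, dVisit P γ ρ0 pol s * klState pol' pol s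

set_option linter.unusedSectionVars false
set_option maxHeartbeats 1000000

-- f(x) = (x+1) log x - 2(x-1) is monotone on (0,∞)
private lemma aux_f_deriv {x : ℝ} (hx : 0 < x) :
    HasDerivAt (fun x : ℝ => (x + 1) * Real.log x - 2 * (x - 1))
      (Real.log x + (x + 1) / x - 2) x := by
  have h1 : HasDerivAt (fun x : ℝ => (x + 1) * Real.log x)
      (1 * Real.log x + (x + 1) * x⁻¹) x :=
    (((hasDerivAt_id x).add_const 1)).mul (Real.hasDerivAt_log hx.ne')
  have h2 : HasDerivAt (fun x : ℝ => 2 * (x - 1)) 2 x := by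
    simpa using ((hasDerivAt_id x).sub_const 1).const_mul 2
  have := h1.sub h2
  refine this.congr_deriv ?_
  have hx' : x ≠ 0 := hx.ne'
  ring

private lemma aux_f_mono : MonotoneOn (fun x : ℝ => (x + 1) * Real.log x - 2 * (x - 1))
    (Set.Ioi 0) := by
  have hint : interior (Set.Ioi (0:ℝ)) = Set.Ioi 0 := interior_Ioi
  apply monotoneOn_of_deriv_nonneg (convex_Ioi 0)
  · intro x hx
    exact ((aux_f_deriv hx).continuousAt.continuousWithinAt)
  · rw [hint]
    intro x hx
    exact (aux_f_deriv hx).differentiableAt.differentiableWithinAt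
  · rw [hint]
    intro x hx
    rw [(aux_f_deriv hx).deriv]
    have h := Real.one_sub_inv_le_log_of_pos hx
    have hx0 : (0:ℝ) < x := hx
    have hx2 : (x + 1) / x = 1 + x⁻¹ := by field_simp
    rw [hx2]
    linarith

private lemma aux_f_nonneg {x : ℝ} (hx : 1 ≤ x) :
    0 ≤ (x + 1) * Real.log x - 2 * (x - 1) := by
  have := aux_f_mono (Set.mem_Ioi.2 one_pos) (Set.mem_Ioi.2 (lt_of_lt_of_le one_pos hx)) hx
  simpa using this

private lemma aux_f_nonpos {x : ℝ} (hx0 : 0 < x) (hx : x ≤ 1) :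
    (x + 1) * Real.log x - 2 * (x - 1) ≤ 0 := by
  have := aux_f_mono (Set.mem_Ioi.2 hx0) (Set.mem_Ioi.2 one_pos) hx
  simpa using this

private lemma aux_g_deriv {x : ℝ} (hx : 0 < x) :
    HasDerivAt (fun x : ℝ => 2 * (x + 2) * (x * Real.log x - x + 1) - 3 * (x - 1) ^ 2)
      (4 * ((x + 1) * Real.log x - 2 * (x - 1))) x := by
  have hφ : HasDerivAt (fun x : ℝ => x * Real.log x - x + 1) (Real.log x) x := by
    have h1 := Real.hasDerivAt_mul_log hx.ne'
    have := (h1.sub (hasDerivAt_id x)).add_const 1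
    simpa using this
  have h2 : HasDerivAt (fun x : ℝ => 2 * (x + 2)) 2 x := by
    simpa using ((hasDerivAt_id x).add_const 2).const_mul 2
  have h3 : HasDerivAt (fun x : ℝ => 3 * (x - 1) ^ 2) (3 * (2 * (x - 1))) x := by
    have := (((hasDerivAt_id x).sub_const 1).pow 2).const_mul 3
    simpa using this
  have := (h2.mul hφ).sub h3
  refine this.congr_deriv ?_
  ring

private lemma aux_g_nonneg {x : ℝ} (hx : 0 ≤ x) :
    3 * (x - 1) ^ 2 ≤ 2 * (x + 2) * (x * Real.log x - x + 1) := by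
  rcases eq_or_lt_of_le hx with h | hx0
  · rw [← h]; simp [Real.log_zero]; norm_num
  rw [← sub_nonneg]
  set g : ℝ → ℝ := fun x => 2 * (x + 2) * (x * Real.log x - x + 1) - 3 * (x - 1) ^ 2 with hg
  have hg1 : g 1 = 0 := by simp [hg]
  rcases le_or_gt 1 x with h1 | h1
  · -- monotone on Ici 1
    have hmono : MonotoneOn g (Set.Ici 1) := by
      apply monotoneOn_of_deriv_nonneg (convex_Ici 1)
      · intro y hy
        exact (aux_g_deriv (lt_of_lt_of_le one_pos hy)).continuousAt.continuousWithinAt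
      · rw [interior_Ici]
        intro y hy
        exact (aux_g_deriv (lt_trans one_pos hy)).differentiableAt.differentiableWithinAt
      · rw [interior_Ici]
        intro y hy
        rw [(aux_g_deriv (lt_trans one_pos hy)).deriv]
        have := aux_f_nonneg (le_of_lt hy)
        linarith
    have := hmono (Set.mem_Ici.2 le_rfl) (Set.mem_Ici.2 h1) h1
    rw [hg1] at this; exact this
  · -- antitone on Ioc 0 1
    have hanti : AntitoneOn g (Set.Ioc 0 1) := by
      apply antitoneOn_of_deriv_nonpos (convex_Ioc 0 1)
      · intro y hy
        exact (aux_g_deriv hy.1).continuousAt.continuousWithinAt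
      · rw [interior_Ioc]
        intro y hy
        exact (aux_g_deriv hy.1).differentiableAt.differentiableWithinAt
      · rw [interior_Ioc]
        intro y hy
        rw [(aux_g_deriv hy.1).deriv]
        have := aux_f_nonpos hy.1 (le_of_lt hy.2)
        linarith
    have := hanti (Set.mem_Ioc.2 ⟨hx0, le_of_lt h1⟩) (Set.mem_Ioc.2 ⟨one_pos, le_rfl⟩) (le_of_lt h1)
    rw [hg1] at this; exact this

/-- pointwise: `3(p-q)²/(p+2q) ≤ 2(p log(p/q) - p + q)` for `p,q ≥ 0`, `q = 0 → p = 0`. -/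
private lemma aux_point {p q : ℝ} (hp : 0 ≤ p) (hq : 0 ≤ q) (habs : q = 0 → p = 0) :
    3 * (p - q) ^ 2 / (p + 2 * q) ≤ 2 * (p * Real.log (p / q) - p + q) := by
  rcases eq_or_lt_of_le hq with h0 | hq0
  · have hp0 : p = 0 := habs h0.symm
    simp [hp0, ← h0]
  · set x := p / q with hxdef
    have hx : 0 ≤ x := div_nonneg hp hq0.le
    have hpx : p = q * x := by rw [hxdef, mul_div_cancel₀ _ hq0.ne']
    have key := aux_g_nonneg hx
    have hq2 : 0 < x + 2 := by linarith
    rw [div_le_iff₀ (by nlinarith : (0:ℝ) < p + 2 * q)]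
    have hexp : p * Real.log (p / q) - p + q = q * (x * Real.log x - x + 1) := by
      rw [← hxdef, hpx]; ring
    rw [hexp, hpx]
    nlinarith [mul_le_mul_of_nonneg_left key (mul_nonneg hq0.le hq0.le), sq_nonneg (x - 1),
      mul_nonneg hq0.le hq0.le]

/-- Finite Pinsker: `(∑|p-q|)² ≤ 2 ∑ p log(p/q)` for prob. vectors with `p ≪ q`. -/
private lemma aux_pinsker {A : Type*} [Fintype A] {p q : A → ℝ}
    (hp0 : ∀ a, 0 ≤ p a) (hq0 : ∀ a, 0 ≤ q a) (hp1 : ∑ a, p a = 1) (hq1 : ∑ a, q a = 1)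
    (habs : ∀ a, q a = 0 → p a = 0) :
    (∑ a, |p a - q a|) ^ 2 ≤ 2 * ∑ a, p a * Real.log (p a / q a) := by
  have key := Finset.sum_sq_le_sum_mul_sum_of_sq_eq_mul (Finset.univ : Finset A)
    (r := fun a => |p a - q a|) (f := fun a => (p a + 2 * q a) / 3)
    (g := fun a => 3 * (p a - q a) ^ 2 / (p a + 2 * q a))
    (fun a _ => div_nonneg (by nlinarith [hp0 a, hq0 a]) (by norm_num))
    (fun a _ => div_nonneg (by positivity) (by nlinarith [hp0 a, hq0 a]))
    (fun a _ => by
      rcases eq_or_lt_of_le (hq0 a) with h0 | hq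
      · have := habs a h0.symm
        simp [this, ← h0]
      · have hpos : (0:ℝ) < p a + 2 * q a := by nlinarith [hp0 a]
        rw [sq_abs]
        rw [div_mul_div_comm, mul_comm (p a + 2 * q a), mul_div_mul_right _ _ hpos.ne', mul_div_cancel_left₀ _ (by norm_num)])
  have hsf : ∑ a, (p a + 2 * q a) / 3 = 1 := by
    rw [← Finset.sum_div, Finset.sum_add_distrib, hp1, ← Finset.mul_sum, hq1]
    norm_num
  have hsg : ∑ a, 3 * (p a - q a) ^ 2 / (p a + 2 * q a) ≤
      2 * ∑ a, p a * Real.log (p a / q a) := by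
    have : ∀ a ∈ (Finset.univ : Finset A), 3 * (p a - q a) ^ 2 / (p a + 2 * q a) ≤
        2 * (p a * Real.log (p a / q a) - p a + q a) :=
      fun a _ => aux_point (hp0 a) (hq0 a) (habs a)
    calc ∑ a, 3 * (p a - q a) ^ 2 / (p a + 2 * q a)
        ≤ ∑ a, 2 * (p a * Real.log (p a / q a) - p a + q a) := Finset.sum_le_sum this
      _ = 2 * ∑ a, p a * Real.log (p a / q a) := by
          rw [← Finset.mul_sum]
          congr 1
          rw [show (fun a => p a * Real.log (p a / q a) - p a + q a) = fun a =>
            (p a * Real.log (p a / q a)) + (q a - p a) from by funext a; ring]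
          rw [Finset.sum_add_distrib, Finset.sum_sub_distrib, hp1, hq1]
          ring
  calc (∑ a, |p a - q a|) ^ 2 ≤ (∑ a, (p a + 2 * q a) / 3) *
        ∑ a, 3 * (p a - q a) ^ 2 / (p a + 2 * q a) := key
    _ = ∑ a, 3 * (p a - q a) ^ 2 / (p a + 2 * q a) := by rw [hsf, one_mul]
    _ ≤ 2 * ∑ a, p a * Real.log (p a / q a) := hsg

section AuxMDP

variable {S A : Type*} [Fintype S] [DecidableEq S] [Fintype A]

/-- row vector `ρ0 Pᵗ`. -/
noncomputable def uvec (P : S → A → S → ℝ) (ρ0 : S → ℝ) (pol : S → A → ℝ)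
    (t : ℕ) (s : S) : ℝ :=
  ∑ s0, ρ0 s0 * (transMat P pol ^ t) s0 s

variable {P : S → A → S → ℝ} {γ : ℝ} {ρ0 : S → ℝ} {pol : S → A → ℝ}

lemma transMat_nonneg (hP0 : ∀ s a s', 0 ≤ P s a s') (hpol0 : ∀ s a, 0 ≤ pol s a)
    (s s' : S) : 0 ≤ transMat P pol s s' :=
  Finset.sum_nonneg fun a _ => mul_nonneg (hpol0 s a) (hP0 s a s')

lemma transMat_rowsum (hP1 : ∀ s a, ∑ s', P s a s' = 1) (hpol1 : ∀ s, ∑ a, pol s a = 1)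
    (s : S) : ∑ s', transMat P pol s s' = 1 := by
  unfold transMat
  rw [Finset.sum_comm]
  have : ∀ a, ∑ s', pol s a * P s a s' = pol s a := by
    intro a; rw [← Finset.mul_sum, hP1, mul_one]
  simp_rw [this, hpol1]

lemma transMat_pow_nonneg (hP0 : ∀ s a s', 0 ≤ P s a s') (hpol0 : ∀ s a, 0 ≤ pol s a)
    (t : ℕ) (s s' : S) : 0 ≤ (transMat P pol ^ t) s s' := by
  induction t generalizing s s' with
  | zero => rw [pow_zero]; by_cases h : s = s' <;> simp [Matrix.one_apply, h]
  | succ t ih =>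
    rw [pow_succ, Matrix.mul_apply]
    exact Finset.sum_nonneg fun s1 _ => mul_nonneg (ih s s1) (transMat_nonneg hP0 hpol0 s1 s')

lemma transMat_pow_rowsum (hP1 : ∀ s a, ∑ s', P s a s' = 1) (hpol1 : ∀ s, ∑ a, pol s a = 1)
    (t : ℕ) (s : S) : ∑ s', (transMat P pol ^ t) s s' = 1 := by
  induction t generalizing s with
  | zero => simp [Matrix.one_apply]
  | succ t ih =>
    simp_rw [pow_succ, Matrix.mul_apply]
    rw [Finset.sum_comm]
    have : ∀ s1, ∑ s', (transMat P pol ^ t) s s1 * transMat P pol s1 s' =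
        (transMat P pol ^ t) s s1 := by
      intro s1; rw [← Finset.mul_sum, transMat_rowsum hP1 hpol1, mul_one]
    simp_rw [this, ih]

lemma transMat_pow_le_one (hP0 : ∀ s a s', 0 ≤ P s a s') (hP1 : ∀ s a, ∑ s', P s a s' = 1)
    (hpol0 : ∀ s a, 0 ≤ pol s a) (hpol1 : ∀ s, ∑ a, pol s a = 1)
    (t : ℕ) (s s' : S) : (transMat P pol ^ t) s s' ≤ 1 := by
  rw [← transMat_pow_rowsum hP1 hpol1 t s]
  exact Finset.single_le_sum (fun s1 _ => transMat_pow_nonneg hP0 hpol0 t s s1)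
    (Finset.mem_univ s')

lemma uvec_nonneg (hP0 : ∀ s a s', 0 ≤ P s a s') (hρ0 : ∀ s, 0 ≤ ρ0 s)
    (hpol0 : ∀ s a, 0 ≤ pol s a) (t : ℕ) (s : S) : 0 ≤ uvec P ρ0 pol t s :=
  Finset.sum_nonneg fun s0 _ => mul_nonneg (hρ0 s0) (transMat_pow_nonneg hP0 hpol0 t s0 s)

lemma uvec_sum (hP1 : ∀ s a, ∑ s', P s a s' = 1) (hρ1 : ∑ s, ρ0 s = 1)
    (hpol1 : ∀ s, ∑ a, pol s a = 1) (t : ℕ) : ∑ s, uvec P ρ0 pol t s = 1 := by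
  unfold uvec
  rw [Finset.sum_comm]
  have : ∀ s0, ∑ s, ρ0 s0 * (transMat P pol ^ t) s0 s = ρ0 s0 := by
    intro s0; rw [← Finset.mul_sum, transMat_pow_rowsum hP1 hpol1, mul_one]
  simp_rw [this, hρ1]

lemma uvec_le_one (hP0 : ∀ s a s', 0 ≤ P s a s') (hP1 : ∀ s a, ∑ s', P s a s' = 1)
    (hρ0 : ∀ s, 0 ≤ ρ0 s) (hρ1 : ∑ s, ρ0 s = 1)
    (hpol0 : ∀ s a, 0 ≤ pol s a) (hpol1 : ∀ s, ∑ a, pol s a = 1)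
    (t : ℕ) (s : S) : uvec P ρ0 pol t s ≤ 1 := by
  rw [← uvec_sum hP1 hρ1 hpol1 (pol := pol) t]
  exact Finset.single_le_sum (fun s1 _ => uvec_nonneg hP0 hρ0 hpol0 t s1) (Finset.mem_univ s)

lemma uvec_zero (s : S) : uvec P ρ0 pol 0 s = ρ0 s := by
  unfold uvec
  simp [Matrix.one_apply]

lemma uvec_succ (t : ℕ) (s : S) :
    uvec P ρ0 pol (t + 1) s = ∑ s1, uvec P ρ0 pol t s1 * transMat P pol s1 s := by
  unfold uvec
  simp_rw [pow_succ, Matrix.mul_apply, Finset.mul_sum, Finset.sum_mul]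
  rw [Finset.sum_comm]
  apply Finset.sum_congr rfl
  intro s1 _
  apply Finset.sum_congr rfl
  intro s0 _
  ring

lemma summable_geom_bdd {γ : ℝ} (hγ0 : 0 ≤ γ) (hγ1 : γ < 1) {c : ℕ → ℝ} {C : ℝ}
    (h : ∀ t, |c t| ≤ C) : Summable fun t => γ ^ t * c t := by
  apply Summable.of_abs
  apply Summable.of_nonneg_of_le (fun t => abs_nonneg _) (fun t => ?_)
    ((summable_geometric_of_lt_one hγ0 hγ1).mul_right C)
  rw [abs_mul, abs_pow, abs_of_nonneg hγ0]
  exact mul_le_mul_of_nonneg_left (h t) (by positivity)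

lemma wsum_abs_le {u g : S → ℝ} (h0 : ∀ s, 0 ≤ u s) (h1 : ∀ s, u s ≤ 1) :
    |∑ s, u s * g s| ≤ ∑ s, |g s| := by
  calc |∑ s, u s * g s| ≤ ∑ s, |u s * g s| := Finset.abs_sum_le_sum_abs _ _
    _ ≤ ∑ s, |g s| := by
        apply Finset.sum_le_sum
        intro s _
        rw [abs_mul, abs_of_nonneg (h0 s)]
        calc u s * |g s| ≤ 1 * |g s| := by
              exact mul_le_mul_of_nonneg_right (h1 s) (abs_nonneg _)
          _ = |g s| := one_mul _

/-- `Dsum g = ∑' t, γ^t * ⟨u_t, g⟩`. -/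
noncomputable def Dsum (P : S → A → S → ℝ) (γ : ℝ) (ρ0 : S → ℝ) (pol : S → A → ℝ)
    (g : S → ℝ) : ℝ :=
  ∑' t : ℕ, γ ^ t * ∑ s, uvec P ρ0 pol t s * g s

section WithHyps

variable (hP0 : ∀ s a s', 0 ≤ P s a s') (hP1 : ∀ s a, ∑ s', P s a s' = 1)
    (hγ0 : 0 < γ) (hγ1 : γ < 1)
    (hρ0 : ∀ s, 0 ≤ ρ0 s) (hρ1 : ∑ s, ρ0 s = 1)
    (hpol0 : ∀ s a, 0 ≤ pol s a) (hpol1 : ∀ s, ∑ a, pol s a = 1)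

include hP0 hP1 hγ0 hγ1 hρ0 hρ1 hpol0 hpol1

lemma summable_dsum (g : S → ℝ) :
    Summable fun t : ℕ => γ ^ t * ∑ s, uvec P ρ0 pol t s * g s := by
  apply summable_geom_bdd hγ0.le hγ1 (C := ∑ s, |g s|)
  intro t
  exact wsum_abs_le (uvec_nonneg hP0 hρ0 hpol0 t)
    (uvec_le_one hP0 hP1 hρ0 hρ1 hpol0 hpol1 t) (g := g)

lemma summable_dsum_single (g : S → ℝ) (s : S) :
    Summable fun t : ℕ => γ ^ t * (uvec P ρ0 pol t s * g s) := by
  apply summable_geom_bdd hγ0.le hγ1 (C := |g s|)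
  intro t
  rw [abs_mul]
  calc |uvec P ρ0 pol t s| * |g s| ≤ 1 * |g s| := by
        apply mul_le_mul_of_nonneg_right _ (abs_nonneg _)
        rw [abs_of_nonneg (uvec_nonneg hP0 hρ0 hpol0 t s)]
        exact uvec_le_one hP0 hP1 hρ0 hρ1 hpol0 hpol1 t s
    _ = |g s| := one_mul _

lemma sum_dVisit_mul (g : S → ℝ) :
    ∑ s, dVisit P γ ρ0 pol s * g s = (1 - γ) * Dsum P γ ρ0 pol g := by
  unfold dVisit Dsum
  have h1 : ∀ s, ((1 - γ) * ∑' t : ℕ, γ ^ t * ∑ s0, ρ0 s0 * (transMat P pol ^ t) s0 s) * g s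
      = (1 - γ) * ∑' t : ℕ, γ ^ t * (uvec P ρ0 pol t s * g s) := by
    intro s
    rw [mul_assoc, ← tsum_mul_right]
    congr 1
    apply tsum_congr
    intro t
    rw [mul_assoc]
    rfl
  simp_rw [h1]
  rw [← Finset.mul_sum]
  congr 1
  rw [← Summable.tsum_finsetSum (fun s _ => summable_dsum_single hP0 hP1 hγ0 hγ1 hρ0 hρ1 hpol0 hpol1 g s)]
  apply tsum_congr
  intro t
  rw [← Finset.mul_sum]

lemma sum_dVisit_eq_one : ∑ s, dVisit P γ ρ0 pol s = 1 := by
  have := sum_dVisit_mul hP0 hP1 hγ0 hγ1 hρ0 hρ1 hpol0 hpol1 (fun _ => (1 : ℝ))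
  simp only [mul_one] at this
  rw [this]
  unfold Dsum
  have : ∀ t : ℕ, γ ^ t * ∑ s, uvec P ρ0 pol t s * 1 = γ ^ t := by
    intro t
    simp_rw [mul_one]
    rw [uvec_sum hP1 hρ1 hpol1, mul_one]
  rw [tsum_congr this, tsum_geometric_of_lt_one hγ0.le hγ1]
  rw [mul_inv_cancel₀ (by linarith : (1:ℝ) - γ ≠ 0)]

lemma dVisit_nonneg (s : S) : 0 ≤ dVisit P γ ρ0 pol s := by
  unfold dVisit
  apply mul_nonneg (by linarith)
  apply tsum_nonneg
  intro t
  exact mul_nonneg (by positivity) (uvec_nonneg hP0 hρ0 hpol0 t s)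

lemma Jret_eq_Dsum (F : S → A → ℝ) :
    Jret P γ ρ0 F pol = Dsum P γ ρ0 pol (fun s => ∑ a, pol s a * F s a) := by
  unfold Jret Vfun Dsum
  set r : S → ℝ := fun s => ∑ a, pol s a * F s a with hr
  have h1 : ∀ s, ρ0 s * ∑' t : ℕ, γ ^ t * ∑ s', (transMat P pol ^ t) s s' * r s'
      = ∑' t : ℕ, γ ^ t * (ρ0 s * ∑ s', (transMat P pol ^ t) s s' * r s') := by
    intro s
    rw [← tsum_mul_left]
    apply tsum_congr; intro t; ring
  rw [Finset.sum_congr rfl (fun s _ => h1 s)]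
  rw [← Summable.tsum_finsetSum]
  · apply tsum_congr
    intro t
    rw [← Finset.mul_sum]
    congr 1
    unfold uvec
    simp_rw [Finset.mul_sum, Finset.sum_mul]
    rw [Finset.sum_comm]
    apply Finset.sum_congr rfl
    intro s _
    apply Finset.sum_congr rfl
    intro s' _
    ring
  · intro s _
    apply summable_geom_bdd hγ0.le hγ1 (C := |ρ0 s| * ∑ s', |r s'|)
    intro t
    rw [abs_mul]
    apply mul_le_mul_of_nonneg_left _ (abs_nonneg _)
    exact wsum_abs_le (fun s' => transMat_pow_nonneg hP0 hpol0 t s s')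
      (fun s' => transMat_pow_le_one hP0 hP1 hpol0 hpol1 t s s') (g := r)

omit hpol0 hpol1 in
lemma adv_expand (F : S → A → ℝ) {pol' : S → A → ℝ} (hpol'1 : ∀ s, ∑ a, pol' s a = 1)
    (s : S) :
    ∑ a, pol' s a * Adv P γ F pol s a
      = (∑ a, pol' s a * F s a)
        + γ * ∑ s', transMat P pol' s s' * Vfun P γ F pol s'
        - Vfun P γ F pol s := by
  have hterm : ∀ a, pol' s a * Adv P γ F pol s a
      = pol' s a * F s a
        + γ * ∑ s', pol' s a * P s a s' * Vfun P γ F pol s'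
        - pol' s a * Vfun P γ F pol s := by
    intro a
    unfold Adv Qfun
    rw [mul_sub, mul_add]
    congr 2
    simp_rw [Finset.mul_sum]
    exact Finset.sum_congr rfl fun s' _ => by ring
  rw [Finset.sum_congr rfl (fun a _ => hterm a)]
  rw [Finset.sum_sub_distrib, Finset.sum_add_distrib, ← Finset.sum_mul, hpol'1, one_mul]
  congr 2
  rw [← Finset.mul_sum]
  congr 1
  rw [Finset.sum_comm]
  unfold transMat
  apply Finset.sum_congr rfl
  intro s' _
  rw [Finset.sum_mul]

lemma perf_diff (F : S → A → ℝ) {pol' : S → A → ℝ}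
    (hpol'0 : ∀ s a, 0 ≤ pol' s a) (hpol'1 : ∀ s, ∑ a, pol' s a = 1) :
    ∑ s, dVisit P γ ρ0 pol' s * (∑ a, pol' s a * Adv P γ F pol s a)
      = (1 - γ) * (Jret P γ ρ0 F pol' - Jret P γ ρ0 F pol) := by
  rw [sum_dVisit_mul hP0 hP1 hγ0 hγ1 hρ0 hρ1 hpol'0 hpol'1]
  congr 1
  unfold Dsum
  set V : S → ℝ := Vfun P γ F pol with hV
  set r' : S → ℝ := fun s => ∑ a, pol' s a * F s a with hr'
  set c : ℕ → ℝ := fun t => ∑ s, uvec P ρ0 pol' t s * V s with hc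
  set b : ℕ → ℝ := fun t => ∑ s, uvec P ρ0 pol' t s * r' s with hb
  have hdecomp : ∀ t : ℕ, γ ^ t * ∑ s, uvec P ρ0 pol' t s * (∑ a, pol' s a * Adv P γ F pol s a)
      = (γ ^ t * b t + γ ^ (t + 1) * c (t + 1)) - γ ^ t * c t := by
    intro t
    have h1 : ∀ s, uvec P ρ0 pol' t s * (∑ a, pol' s a * Adv P γ F pol s a)
        = uvec P ρ0 pol' t s * r' s
          + γ * (uvec P ρ0 pol' t s * ∑ s', transMat P pol' s s' * V s')
          - uvec P ρ0 pol' t s * V s := by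
      intro s
      rw [adv_expand hP0 hP1 hγ0 hγ1 hρ0 hρ1 F hpol'1 s]
      ring
    rw [Finset.sum_congr rfl (fun s _ => h1 s), Finset.sum_sub_distrib, Finset.sum_add_distrib]
    have h2 : ∑ s, γ * (uvec P ρ0 pol' t s * ∑ s', transMat P pol' s s' * V s')
        = γ * c (t + 1) := by
      rw [← Finset.mul_sum]
      congr 1
      rw [hc]
      simp only []
      simp_rw [uvec_succ, Finset.sum_mul, Finset.mul_sum]
      rw [Finset.sum_comm]
      apply Finset.sum_congr rfl
      intro s _
      apply Finset.sum_congr rfl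
      intro s' _
      ring
    rw [h2]
    rw [pow_succ]
    ring
  rw [tsum_congr hdecomp]
  have hsum_b : Summable fun t => γ ^ t * b t :=
    summable_dsum hP0 hP1 hγ0 hγ1 hρ0 hρ1 hpol'0 hpol'1 r'
  have hsum_c : Summable fun t => γ ^ t * c t :=
    summable_dsum hP0 hP1 hγ0 hγ1 hρ0 hρ1 hpol'0 hpol'1 V
  have hsum_c' : Summable fun t => γ ^ (t + 1) * c (t + 1) :=
    (summable_nat_add_iff 1).2 hsum_c
  rw [Summable.tsum_sub (hsum_b.add hsum_c') hsum_c, Summable.tsum_add hsum_b hsum_c']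
  have hshift : ∑' t : ℕ, γ ^ (t + 1) * c (t + 1)
      = (∑' t : ℕ, γ ^ t * c t) - c 0 := by
    have := Summable.tsum_eq_zero_add hsum_c
    rw [this]
    simp [pow_zero, one_mul]
  have hc0 : c 0 = Jret P γ ρ0 F pol := by
    rw [hc]
    simp only []
    unfold Jret
    apply Finset.sum_congr rfl
    intro s _
    rw [uvec_zero]
  have hJ' : ∑' t : ℕ, γ ^ t * b t = Jret P γ ρ0 F pol' := by
    rw [Jret_eq_Dsum hP0 hP1 hγ0 hγ1 hρ0 hρ1 hpol'0 hpol'1 F]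
    rfl
  rw [hshift, hc0, hJ']
  ring

omit hP0 hP1 hγ0 hγ1 hρ0 hρ1 hpol0 hpol1 in
lemma tsum_geom_tail (hγ0 : 0 ≤ γ) (hγ1 : γ < 1) (c : ℝ) (k : ℕ) :
    ∑' t : ℕ, (if k < t then γ ^ t * c else 0) = γ ^ (k + 1) * (1 - γ)⁻¹ * c := by
  have hsum : Summable fun t : ℕ => if k < t then γ ^ t * c else 0 := by
    apply Summable.of_abs
    apply Summable.of_nonneg_of_le (fun t => abs_nonneg _) (fun t => ?_)
      ((summable_geometric_of_lt_one hγ0 hγ1).mul_right |c|)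
    by_cases h : k < t
    · rw [if_pos h, abs_mul, abs_pow, abs_of_nonneg hγ0]
    · rw [if_neg h, abs_zero]; positivity
  rw [← Summable.sum_add_tsum_nat_add (k + 1) hsum]
  have h0 : ∑ t ∈ Finset.range (k + 1), (if k < t then γ ^ t * c else 0) = 0 := by
    apply Finset.sum_eq_zero
    intro t ht
    have ht' := Finset.mem_range.1 ht
    rw [if_neg (by omega : ¬ k < t)]
  rw [h0, zero_add]
  have h1 : ∀ j : ℕ, (if k < j + (k + 1) then γ ^ (j + (k + 1)) * c else 0)
      = (γ ^ (k + 1) * c) * γ ^ j := by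
    intro j
    rw [if_pos (by omega), pow_add]
    ring
  rw [tsum_congr h1, tsum_mul_left, tsum_geometric_of_lt_one hγ0 hγ1]
  ring

omit hP0 hP1 hρ0 hρ1 hpol0 hpol1 in
lemma swap_lemma (c : ℕ → ℝ) (hc0 : ∀ k, 0 ≤ c k) (C : ℝ) (hcb : ∀ k, c k ≤ C) :
    ∑' t : ℕ, γ ^ t * ∑ k ∈ Finset.range t, c k
      = γ * (1 - γ)⁻¹ * ∑' k : ℕ, γ ^ k * c k := by
  have hC0 : 0 ≤ C := le_trans (hc0 0) (hcb 0)
  set f : ℕ → ℕ → ℝ := fun k t => if k < t then γ ^ t * c k else 0 with hf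
  have hsq : Real.sqrt γ * Real.sqrt γ = γ := Real.mul_self_sqrt hγ0.le
  have hs0 : 0 ≤ Real.sqrt γ := Real.sqrt_nonneg γ
  have hs1 : Real.sqrt γ < 1 := by
    rw [show (1:ℝ) = Real.sqrt 1 from (Real.sqrt_one).symm]
    exact Real.sqrt_lt_sqrt hγ0.le hγ1
  have hFs : Summable (Function.uncurry f) := by
    apply Summable.of_nonneg_of_le (f := fun p : ℕ × ℕ =>
        C * (Real.sqrt γ ^ p.1 * Real.sqrt γ ^ p.2))
    · intro p
      rcases p with ⟨k, t⟩
      simp only [Function.uncurry, hf]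
      by_cases h : k < t
      · rw [if_pos h]
        exact mul_nonneg (by positivity) (hc0 k)
      · rw [if_neg h]
    · intro p
      rcases p with ⟨k, t⟩
      simp only [Function.uncurry, hf]
      by_cases h : k < t
      · rw [if_pos h]
        have hpow : γ ^ t ≤ Real.sqrt γ ^ k * Real.sqrt γ ^ t := by
          have h1 : γ ^ t = Real.sqrt γ ^ t * Real.sqrt γ ^ t := by
            rw [← mul_pow, hsq]
          rw [h1]
          apply mul_le_mul_of_nonneg_right _ (by positivity)
          exact pow_le_pow_of_le_one hs0 hs1.le (le_of_lt h)
        calc γ ^ t * c k ≤ γ ^ t * C := by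
              exact mul_le_mul_of_nonneg_left (hcb k) (by positivity)
          _ ≤ (Real.sqrt γ ^ k * Real.sqrt γ ^ t) * C := by
              exact mul_le_mul_of_nonneg_right hpow hC0
          _ = C * (Real.sqrt γ ^ k * Real.sqrt γ ^ t) := by ring
      · rw [if_neg h]; positivity
    · exact ((summable_geometric_of_lt_one hs0 hs1).mul_of_nonneg
        (summable_geometric_of_lt_one hs0 hs1) (fun k => by positivity)
        (fun t => by positivity)).mul_left C
  have hleft : ∀ t : ℕ, ∑' k : ℕ, f k t = γ ^ t * ∑ k ∈ Finset.range t, c k := by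
    intro t
    rw [tsum_eq_sum (s := Finset.range t)
      (fun k hk => by rw [hf]; simp only []; rw [if_neg (by simpa using hk)])]
    rw [Finset.mul_sum]
    apply Finset.sum_congr rfl
    intro k hk
    rw [hf]
    simp only []
    rw [if_pos (Finset.mem_range.1 hk)]
  have hright : ∀ k : ℕ, ∑' t : ℕ, f k t = γ ^ (k + 1) * (1 - γ)⁻¹ * c k := fun k =>
    tsum_geom_tail hγ0.le hγ1 (c k) k
  calc ∑' t : ℕ, γ ^ t * ∑ k ∈ Finset.range t, c k
      = ∑' t : ℕ, ∑' k : ℕ, f k t := by rw [tsum_congr hleft]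
    _ = ∑' k : ℕ, ∑' t : ℕ, f k t := Summable.tsum_comm hFs
    _ = ∑' k : ℕ, γ * (1 - γ)⁻¹ * (γ ^ k * c k) := by
        apply tsum_congr
        intro k
        rw [hright k, pow_succ]
        ring
    _ = γ * (1 - γ)⁻¹ * ∑' k : ℕ, γ ^ k * c k := tsum_mul_left

omit hγ0 hγ1 hρ0 hρ1 hpol0 hpol1 in
lemma delta_row_bound (pol' : S → A → ℝ) (s : S) :
    ∑ s', |transMat P pol' s s' - transMat P pol s s'| ≤ ∑ a, |pol' s a - pol s a| := by
  unfold transMat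
  have h1 : ∀ s', |∑ a, pol' s a * P s a s' - ∑ a, pol s a * P s a s'|
      ≤ ∑ a, |pol' s a - pol s a| * P s a s' := by
    intro s'
    rw [← Finset.sum_sub_distrib]
    calc |∑ a, (pol' s a * P s a s' - pol s a * P s a s')|
        ≤ ∑ a, |pol' s a * P s a s' - pol s a * P s a s'| := Finset.abs_sum_le_sum_abs _ _
      _ = ∑ a, |pol' s a - pol s a| * P s a s' := by
          apply Finset.sum_congr rfl
          intro a _
          rw [← sub_mul, abs_mul, abs_of_nonneg (hP0 s a s')]
  calc ∑ s', |∑ a, pol' s a * P s a s' - ∑ a, pol s a * P s a s'|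
      ≤ ∑ s', ∑ a, |pol' s a - pol s a| * P s a s' := Finset.sum_le_sum fun s' _ => h1 s'
    _ = ∑ a, |pol' s a - pol s a| := by
        rw [Finset.sum_comm]
        apply Finset.sum_congr rfl
        intro a _
        rw [← Finset.mul_sum, hP1, mul_one]

omit hγ0 hγ1 in
lemma W_bound {pol' : S → A → ℝ} (hpol'0 : ∀ s a, 0 ≤ pol' s a)
    (hpol'1 : ∀ s, ∑ a, pol' s a = 1) (t : ℕ) :
    ∑ s, |uvec P ρ0 pol' t s - uvec P ρ0 pol t s|
      ≤ ∑ k ∈ Finset.range t, ∑ s, uvec P ρ0 pol k s * ∑ a, |pol' s a - pol s a| := by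
  induction t with
  | zero => simp [uvec_zero]
  | succ t ih =>
    have hkey : ∀ s, uvec P ρ0 pol' (t + 1) s - uvec P ρ0 pol (t + 1) s
        = ∑ s1, ((uvec P ρ0 pol' t s1 - uvec P ρ0 pol t s1) * transMat P pol' s1 s
          + uvec P ρ0 pol t s1 * (transMat P pol' s1 s - transMat P pol s1 s)) := by
      intro s
      rw [uvec_succ, uvec_succ, ← Finset.sum_sub_distrib]
      apply Finset.sum_congr rfl
      intro s1 _
      ring
    have hstep : ∑ s, |uvec P ρ0 pol' (t + 1) s - uvec P ρ0 pol (t + 1) s|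
        ≤ (∑ s, |uvec P ρ0 pol' t s - uvec P ρ0 pol t s|)
          + ∑ s, uvec P ρ0 pol t s * ∑ a, |pol' s a - pol s a| := by
      have h2 : ∀ s, |uvec P ρ0 pol' (t + 1) s - uvec P ρ0 pol (t + 1) s|
          ≤ ∑ s1, |uvec P ρ0 pol' t s1 - uvec P ρ0 pol t s1| * transMat P pol' s1 s
            + ∑ s1, uvec P ρ0 pol t s1 * |transMat P pol' s1 s - transMat P pol s1 s| := by
        intro s
        rw [hkey s]
        calc |∑ s1, ((uvec P ρ0 pol' t s1 - uvec P ρ0 pol t s1) * transMat P pol' s1 s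
              + uvec P ρ0 pol t s1 * (transMat P pol' s1 s - transMat P pol s1 s))|
            ≤ ∑ s1, |(uvec P ρ0 pol' t s1 - uvec P ρ0 pol t s1) * transMat P pol' s1 s
              + uvec P ρ0 pol t s1 * (transMat P pol' s1 s - transMat P pol s1 s)| :=
              Finset.abs_sum_le_sum_abs _ _
          _ ≤ ∑ s1, (|uvec P ρ0 pol' t s1 - uvec P ρ0 pol t s1| * transMat P pol' s1 s
              + uvec P ρ0 pol t s1 * |transMat P pol' s1 s - transMat P pol s1 s|) := by
              apply Finset.sum_le_sum
              intro s1 _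
              calc |(uvec P ρ0 pol' t s1 - uvec P ρ0 pol t s1) * transMat P pol' s1 s
                  + uvec P ρ0 pol t s1 * (transMat P pol' s1 s - transMat P pol s1 s)|
                  ≤ |(uvec P ρ0 pol' t s1 - uvec P ρ0 pol t s1) * transMat P pol' s1 s|
                    + |uvec P ρ0 pol t s1 * (transMat P pol' s1 s - transMat P pol s1 s)| :=
                    abs_add_le _ _
                _ = |uvec P ρ0 pol' t s1 - uvec P ρ0 pol t s1| * transMat P pol' s1 s
                    + uvec P ρ0 pol t s1 * |transMat P pol' s1 s - transMat P pol s1 s| := by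
                    rw [abs_mul, abs_mul,
                      abs_of_nonneg (transMat_nonneg hP0 hpol'0 s1 s),
                      abs_of_nonneg (uvec_nonneg hP0 hρ0 hpol0 t s1)]
          _ = _ := Finset.sum_add_distrib
      calc ∑ s, |uvec P ρ0 pol' (t + 1) s - uvec P ρ0 pol (t + 1) s|
          ≤ ∑ s, (∑ s1, |uvec P ρ0 pol' t s1 - uvec P ρ0 pol t s1| * transMat P pol' s1 s
            + ∑ s1, uvec P ρ0 pol t s1 * |transMat P pol' s1 s - transMat P pol s1 s|) :=
            Finset.sum_le_sum fun s _ => h2 s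
        _ = (∑ s1, |uvec P ρ0 pol' t s1 - uvec P ρ0 pol t s1|
              * ∑ s, transMat P pol' s1 s)
            + ∑ s1, uvec P ρ0 pol t s1
              * ∑ s, |transMat P pol' s1 s - transMat P pol s1 s| := by
            rw [Finset.sum_add_distrib, Finset.sum_comm]
            congr 1
            · apply Finset.sum_congr rfl; intro s1 _; rw [Finset.mul_sum]
            · rw [Finset.sum_comm]
              apply Finset.sum_congr rfl; intro s1 _; rw [Finset.mul_sum]
        _ ≤ (∑ s1, |uvec P ρ0 pol' t s1 - uvec P ρ0 pol t s1|)
            + ∑ s1, uvec P ρ0 pol t s1 * ∑ a, |pol' s1 a - pol s1 a| := by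
            apply add_le_add
            · apply le_of_eq
              apply Finset.sum_congr rfl
              intro s1 _
              rw [transMat_rowsum hP1 hpol'1, mul_one]
            · apply Finset.sum_le_sum
              intro s1 _
              exact mul_le_mul_of_nonneg_left
                (delta_row_bound hP0 hP1 pol' s1) (uvec_nonneg hP0 hρ0 hpol0 t s1)
    rw [Finset.sum_range_succ]
    calc ∑ s, |uvec P ρ0 pol' (t + 1) s - uvec P ρ0 pol (t + 1) s|
        ≤ (∑ s, |uvec P ρ0 pol' t s - uvec P ρ0 pol t s|)
          + ∑ s, uvec P ρ0 pol t s * ∑ a, |pol' s a - pol s a| := hstep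
      _ ≤ _ := by
          apply add_le_add_left ih

lemma dVisit_diff_l1 {pol' : S → A → ℝ} (hpol'0 : ∀ s a, 0 ≤ pol' s a)
    (hpol'1 : ∀ s, ∑ a, pol' s a = 1) :
    ∑ s, |dVisit P γ ρ0 pol' s - dVisit P γ ρ0 pol s|
      ≤ γ * (1 - γ)⁻¹ * ∑ s, dVisit P γ ρ0 pol s * ∑ a, |pol' s a - pol s a| := by
  have h1γ : (0:ℝ) < 1 - γ := by linarith
  set tv : S → ℝ := fun s => ∑ a, |pol' s a - pol s a| with htv
  set c : ℕ → ℝ := fun k => ∑ s, uvec P ρ0 pol k s * tv s with hc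
  have hsummu : ∀ (q : S → A → ℝ), (∀ s a, 0 ≤ q s a) → (∀ s, ∑ a, q s a = 1) →
      ∀ s : S, Summable fun t : ℕ => γ ^ t * uvec P ρ0 q t s := by
    intro q hq0 hq1 s
    apply summable_geom_bdd hγ0.le hγ1 (C := 1)
    intro t
    rw [abs_of_nonneg (uvec_nonneg hP0 hρ0 hq0 t s)]
    exact uvec_le_one hP0 hP1 hρ0 hρ1 hq0 hq1 t s
  -- pointwise bound
  have hpt : ∀ s, |dVisit P γ ρ0 pol' s - dVisit P γ ρ0 pol s|
      ≤ (1 - γ) * ∑' t : ℕ, γ ^ t * |uvec P ρ0 pol' t s - uvec P ρ0 pol t s| := by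
    intro s
    have hd : dVisit P γ ρ0 pol' s - dVisit P γ ρ0 pol s
        = (1 - γ) * ∑' t : ℕ, (γ ^ t * uvec P ρ0 pol' t s - γ ^ t * uvec P ρ0 pol t s) := by
      unfold dVisit
      rw [Summable.tsum_sub (hsummu pol' hpol'0 hpol'1 s) (hsummu pol hpol0 hpol1 s), mul_sub]
      rfl
    rw [hd, abs_mul, abs_of_nonneg h1γ.le]
    apply mul_le_mul_of_nonneg_left _ h1γ.le
    have hsble : Summable fun t : ℕ =>
        ‖γ ^ t * uvec P ρ0 pol' t s - γ ^ t * uvec P ρ0 pol t s‖ := by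
      apply Summable.of_nonneg_of_le (fun t => norm_nonneg _) (fun t => ?_)
        ((summable_geometric_of_lt_one hγ0.le hγ1).mul_right 2)
      rw [Real.norm_eq_abs, ← mul_sub, abs_mul, abs_pow, abs_of_nonneg hγ0.le]
      rw [mul_comm (γ ^ t) (2:ℝ), mul_comm (γ ^ t)]
      apply mul_le_mul_of_nonneg_right _ (by positivity)
      have h1 := uvec_nonneg hP0 hρ0 hpol'0 t s
      have h2 := uvec_le_one hP0 hP1 hρ0 hρ1 hpol'0 hpol'1 t s
      have h3 := uvec_nonneg hP0 hρ0 hpol0 t s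
      have h4 := uvec_le_one hP0 hP1 hρ0 hρ1 hpol0 hpol1 t s
      rw [abs_le]
      constructor <;> linarith
    calc |∑' t : ℕ, (γ ^ t * uvec P ρ0 pol' t s - γ ^ t * uvec P ρ0 pol t s)|
        ≤ ∑' t : ℕ, ‖γ ^ t * uvec P ρ0 pol' t s - γ ^ t * uvec P ρ0 pol t s‖ := by
          rw [← Real.norm_eq_abs]
          exact norm_tsum_le_tsum_norm hsble
      _ = ∑' t : ℕ, γ ^ t * |uvec P ρ0 pol' t s - uvec P ρ0 pol t s| := by
          apply tsum_congr
          intro t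
          rw [Real.norm_eq_abs, ← mul_sub, abs_mul, abs_pow, abs_of_nonneg hγ0.le]
  -- summability of pointwise abs series
  have hsabs : ∀ s : S, Summable fun t : ℕ =>
      γ ^ t * |uvec P ρ0 pol' t s - uvec P ρ0 pol t s| := by
    intro s
    apply summable_geom_bdd hγ0.le hγ1 (C := 2)
    intro t
    rw [abs_abs]
    have h1 := uvec_nonneg hP0 hρ0 hpol'0 t s
    have h2 := uvec_le_one hP0 hP1 hρ0 hρ1 hpol'0 hpol'1 t s
    have h3 := uvec_nonneg hP0 hρ0 hpol0 t s
    have h4 := uvec_le_one hP0 hP1 hρ0 hρ1 hpol0 hpol1 t s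
    rw [abs_le]
    constructor <;> linarith
  have hc0 : ∀ k, 0 ≤ c k := by
    intro k
    apply Finset.sum_nonneg
    intro s _
    exact mul_nonneg (uvec_nonneg hP0 hρ0 hpol0 k s)
      (Finset.sum_nonneg fun a _ => abs_nonneg _)
  have hcb : ∀ k, c k ≤ ∑ s, tv s := by
    intro k
    apply Finset.sum_le_sum
    intro s _
    calc uvec P ρ0 pol k s * tv s ≤ 1 * tv s :=
          mul_le_mul_of_nonneg_right (uvec_le_one hP0 hP1 hρ0 hρ1 hpol0 hpol1 k s)
            (Finset.sum_nonneg fun a _ => abs_nonneg _)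
      _ = tv s := one_mul _
  -- main chain
  calc ∑ s, |dVisit P γ ρ0 pol' s - dVisit P γ ρ0 pol s|
      ≤ ∑ s, (1 - γ) * ∑' t : ℕ, γ ^ t * |uvec P ρ0 pol' t s - uvec P ρ0 pol t s| :=
        Finset.sum_le_sum fun s _ => hpt s
    _ = (1 - γ) * ∑' t : ℕ, γ ^ t * ∑ s, |uvec P ρ0 pol' t s - uvec P ρ0 pol t s| := by
        rw [← Finset.mul_sum]
        congr 1
        rw [← Summable.tsum_finsetSum (fun s _ => hsabs s)]
        apply tsum_congr
        intro t
        rw [← Finset.mul_sum]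
    _ ≤ (1 - γ) * ∑' t : ℕ, γ ^ t * ∑ k ∈ Finset.range t, c k := by
        apply mul_le_mul_of_nonneg_left _ h1γ.le
        apply Summable.tsum_le_tsum _ _ _
        · intro t
          apply mul_le_mul_of_nonneg_left _ (by positivity)
          exact W_bound hP0 hP1 hρ0 hρ1 hpol0 hpol1 hpol'0 hpol'1 t
        · apply summable_geom_bdd hγ0.le hγ1 (C := ∑ s : S, (2:ℝ))
          intro t
          rw [abs_of_nonneg (Finset.sum_nonneg fun s _ => abs_nonneg _)]
          apply Finset.sum_le_sum
          intro s _
          have h1 := uvec_nonneg hP0 hρ0 hpol'0 t s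
          have h2 := uvec_le_one hP0 hP1 hρ0 hρ1 hpol'0 hpol'1 t s
          have h3 := uvec_nonneg hP0 hρ0 hpol0 t s
          have h4 := uvec_le_one hP0 hP1 hρ0 hρ1 hpol0 hpol1 t s
          rw [abs_le]
          constructor <;> linarith
        · apply Summable.of_nonneg_of_le
            (g := fun t : ℕ => γ ^ t * ∑ k ∈ Finset.range t, c k)
            (f := fun t : ℕ => (∑ s, tv s) * ((t : ℝ) ^ 1 * γ ^ t))
          · intro t
            exact mul_nonneg (by positivity)
              (Finset.sum_nonneg fun k _ => hc0 k)
          · intro t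
            have : ∑ k ∈ Finset.range t, c k ≤ (t : ℝ) * ∑ s, tv s := by
              calc ∑ k ∈ Finset.range t, c k ≤ ∑ k ∈ Finset.range t, ∑ s, tv s :=
                    Finset.sum_le_sum fun k _ => hcb k
                _ = (t : ℝ) * ∑ s, tv s := by
                    rw [Finset.sum_const, Finset.card_range, nsmul_eq_mul]
            calc γ ^ t * ∑ k ∈ Finset.range t, c k
                ≤ γ ^ t * ((t : ℝ) * ∑ s, tv s) := by
                  exact mul_le_mul_of_nonneg_left this (by positivity)
              _ = (∑ s, tv s) * ((t : ℝ) ^ 1 * γ ^ t) := by ring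
          · exact (summable_pow_mul_geometric_of_norm_lt_one (R := ℝ) 1
              (by rw [Real.norm_eq_abs, abs_of_nonneg hγ0.le]; exact hγ1)).mul_left _
    _ = (1 - γ) * (γ * (1 - γ)⁻¹ * ∑' k : ℕ, γ ^ k * c k) := by
        rw [swap_lemma hγ0 hγ1 c hc0 (∑ s, tv s) hcb]
    _ = γ * (1 - γ)⁻¹ * ((1 - γ) * ∑' k : ℕ, γ ^ k * c k) := by ring
    _ = γ * (1 - γ)⁻¹ * ((1 - γ) * Dsum P γ ρ0 pol tv) := rfl
    _ = γ * (1 - γ)⁻¹ * ∑ s, dVisit P γ ρ0 pol s * tv s := by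
        rw [← sum_dVisit_mul hP0 hP1 hγ0 hγ1 hρ0 hρ1 hpol0 hpol1 tv]

lemma sum_d_tv_le {pol' : S → A → ℝ} (hpol'0 : ∀ s a, 0 ≤ pol' s a)
    (hpol'1 : ∀ s, ∑ a, pol' s a = 1)
    (habs : ∀ s a, pol s a = 0 → pol' s a = 0)
    {δ : ℝ} (hδ0 : 0 ≤ δ) (hKL : avgKL P γ ρ0 pol' pol ≤ δ) :
    ∑ s, dVisit P γ ρ0 pol s * ∑ a, |pol' s a - pol s a| ≤ Real.sqrt (2 * δ) := by
  set tv : S → ℝ := fun s => ∑ a, |pol' s a - pol s a| with htv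
  have htv0 : ∀ s, 0 ≤ tv s := fun s => Finset.sum_nonneg fun a _ => abs_nonneg _
  have hd0 : ∀ s, 0 ≤ dVisit P γ ρ0 pol s := dVisit_nonneg hP0 hP1 hγ0 hγ1 hρ0 hρ1 hpol0 hpol1
  have hpins : ∀ s, tv s ^ 2 ≤ 2 * klState pol' pol s := fun s =>
    aux_pinsker (fun a => hpol'0 s a) (fun a => hpol0 s a) (hpol'1 s) (hpol1 s)
      (fun a => habs s a)
  have key := Finset.sum_sq_le_sum_mul_sum_of_sq_eq_mul (Finset.univ : Finset S)
    (r := fun s => dVisit P γ ρ0 pol s * tv s) (f := fun s => dVisit P γ ρ0 pol s)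
    (g := fun s => dVisit P γ ρ0 pol s * tv s ^ 2)
    (fun s _ => hd0 s) (fun s _ => mul_nonneg (hd0 s) (sq_nonneg _))
    (fun s _ => by ring)
  have hsum1 : ∑ s, dVisit P γ ρ0 pol s = 1 :=
    sum_dVisit_eq_one hP0 hP1 hγ0 hγ1 hρ0 hρ1 hpol0 hpol1
  have h2 : ∑ s, dVisit P γ ρ0 pol s * tv s ^ 2 ≤ 2 * δ := by
    calc ∑ s, dVisit P γ ρ0 pol s * tv s ^ 2
        ≤ ∑ s, dVisit P γ ρ0 pol s * (2 * klState pol' pol s) :=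
          Finset.sum_le_sum fun s _ => mul_le_mul_of_nonneg_left (hpins s) (hd0 s)
      _ = 2 * avgKL P γ ρ0 pol' pol := by
          unfold avgKL
          rw [Finset.mul_sum]
          exact Finset.sum_congr rfl fun s _ => by ring
      _ ≤ 2 * δ := by linarith
  have hsq : (∑ s, dVisit P γ ρ0 pol s * tv s) ^ 2 ≤ 2 * δ := by
    calc (∑ s, dVisit P γ ρ0 pol s * tv s) ^ 2
        ≤ (∑ s, dVisit P γ ρ0 pol s) * ∑ s, dVisit P γ ρ0 pol s * tv s ^ 2 := key
      _ = ∑ s, dVisit P γ ρ0 pol s * tv s ^ 2 := by rw [hsum1, one_mul]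
      _ ≤ 2 * δ := h2
  have hnn : 0 ≤ ∑ s, dVisit P γ ρ0 pol s * tv s :=
    Finset.sum_nonneg fun s _ => mul_nonneg (hd0 s) (htv0 s)
  calc ∑ s, dVisit P γ ρ0 pol s * tv s
      = Real.sqrt ((∑ s, dVisit P γ ρ0 pol s * tv s) ^ 2) := (Real.sqrt_sq hnn).symm
    _ ≤ Real.sqrt (2 * δ) := Real.sqrt_le_sqrt hsq

lemma step_bound [Nonempty S] (F : S → A → ℝ) {pol' : S → A → ℝ}
    (hpol'0 : ∀ s a, 0 ≤ pol' s a) (hpol'1 : ∀ s, ∑ a, pol' s a = 1)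
    (habs : ∀ s a, pol s a = 0 → pol' s a = 0)
    {δ εR : ℝ} (hδ0 : 0 ≤ δ) (hεR : 0 ≤ εR)
    (hKL : avgKL P γ ρ0 pol' pol ≤ δ)
    (heps : epsAdv P γ F pol pol' ≤ εR) :
    Jret P γ ρ0 F pol + (1 - γ)⁻¹ * surrAdv P γ ρ0 F pol pol'
      - Real.sqrt (2 * δ) * γ / (1 - γ) ^ 2 * εR ≤ Jret P γ ρ0 F pol' := by
  have h1γ : (0:ℝ) < 1 - γ := by linarith
  set g : S → ℝ := fun s => ∑ a, pol' s a * Adv P γ F pol s a with hg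
  have hperf : ∑ s, dVisit P γ ρ0 pol' s * g s
      = (1 - γ) * (Jret P γ ρ0 F pol' - Jret P γ ρ0 F pol) :=
    perf_diff hP0 hP1 hγ0 hγ1 hρ0 hρ1 hpol0 hpol1 F hpol'0 hpol'1
  have hsurr : surrAdv P γ ρ0 F pol pol' = ∑ s, dVisit P γ ρ0 pol s * g s := rfl
  have hgb : ∀ s, |g s| ≤ epsAdv P γ F pol pol' := by
    intro s
    exact Finset.le_sup' (fun s => |∑ a, pol' s a * Adv P γ F pol s a|) (Finset.mem_univ s)
  have heps0 : 0 ≤ epsAdv P γ F pol pol' :=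
    le_trans (abs_nonneg _) (hgb (Classical.arbitrary S))
  have hE : |∑ s, dVisit P γ ρ0 pol' s * g s - ∑ s, dVisit P γ ρ0 pol s * g s|
      ≤ Real.sqrt (2 * δ) * γ * (1 - γ)⁻¹ * εR := by
    rw [← Finset.sum_sub_distrib]
    have h1 : ∀ s, dVisit P γ ρ0 pol' s * g s - dVisit P γ ρ0 pol s * g s
        = (dVisit P γ ρ0 pol' s - dVisit P γ ρ0 pol s) * g s := fun s => by ring
    rw [Finset.sum_congr rfl fun s _ => h1 s]
    calc |∑ s, (dVisit P γ ρ0 pol' s - dVisit P γ ρ0 pol s) * g s|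
        ≤ ∑ s, |(dVisit P γ ρ0 pol' s - dVisit P γ ρ0 pol s) * g s| :=
          Finset.abs_sum_le_sum_abs _ _
      _ ≤ ∑ s, |dVisit P γ ρ0 pol' s - dVisit P γ ρ0 pol s| * epsAdv P γ F pol pol' := by
          apply Finset.sum_le_sum
          intro s _
          rw [abs_mul]
          exact mul_le_mul_of_nonneg_left (hgb s) (abs_nonneg _)
      _ = (∑ s, |dVisit P γ ρ0 pol' s - dVisit P γ ρ0 pol s|) * epsAdv P γ F pol pol' :=
          (Finset.sum_mul _ _ _).symm
      _ ≤ (γ * (1 - γ)⁻¹ * ∑ s, dVisit P γ ρ0 pol s * ∑ a, |pol' s a - pol s a|)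
            * epsAdv P γ F pol pol' := by
          apply mul_le_mul_of_nonneg_right _ heps0
          exact dVisit_diff_l1 hP0 hP1 hγ0 hγ1 hρ0 hρ1 hpol0 hpol1 hpol'0 hpol'1
      _ ≤ (γ * (1 - γ)⁻¹ * Real.sqrt (2 * δ)) * εR := by
          apply mul_le_mul
          · apply mul_le_mul_of_nonneg_left _ (by positivity)
            exact sum_d_tv_le hP0 hP1 hγ0 hγ1 hρ0 hρ1 hpol0 hpol1 hpol'0 hpol'1 habs hδ0 hKL
          · exact heps
          · exact heps0
          · positivity
      _ = Real.sqrt (2 * δ) * γ * (1 - γ)⁻¹ * εR := by ring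
  set B : ℝ := Real.sqrt (2 * δ) * γ * (1 - γ)⁻¹ * εR with hB
  have hE' : surrAdv P γ ρ0 F pol pol' - B
      ≤ (1 - γ) * (Jret P γ ρ0 F pol' - Jret P γ ρ0 F pol) := by
    rw [← hperf, hsurr]
    have := abs_le.1 hE
    linarith [this.1]
  have hmul := mul_le_mul_of_nonneg_left hE' (le_of_lt (inv_pos.2 h1γ))
  rw [← mul_assoc, inv_mul_cancel₀ h1γ.ne', one_mul] at hmul
  have hfin : (1 - γ)⁻¹ * (surrAdv P γ ρ0 F pol pol' - B)
      = (1 - γ)⁻¹ * surrAdv P γ ρ0 F pol pol'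
        - Real.sqrt (2 * δ) * γ / (1 - γ) ^ 2 * εR := by
    rw [hB]
    field_simp
  rw [hfin] at hmul
  linarith

end WithHyps

end AuxMDP
/-- adversarial update reward-budget bound (Theorem 4.2, reward part). -/
theorem adversarial_reward_budget_bound {S A : Type*} [Fintype S] [DecidableEq S] [Fintype A] [Nonempty S] [Nonempty A]
    (P : S → A → S → ℝ) (hP0 : ∀ s a s', 0 ≤ P s a s') (hP1 : ∀ s a, ∑ s', P s a s' = 1)
    (γ : ℝ) (hγ0 : 0 < γ) (hγ1 : γ < 1)
    (ρ0 : S → ℝ) (hρ0 : ∀ s, 0 ≤ ρ0 s) (hρ1 : ∑ s, ρ0 s = 1)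
    (δ : ℝ) (hδ : 0 < δ) (εR : ℝ) (hεR : 0 ≤ εR) (R : S → A → ℝ)
    (n1 n2 : ℕ) (pol σ : ℕ → S → A → ℝ)
    (hpol0 : ∀ i ≤ n2, ∀ s a, 0 ≤ pol i s a)
    (hpol1 : ∀ i ≤ n2, ∀ s, ∑ a, pol i s a = 1)
    (hpabs : ∀ i < n2, ∀ s a, pol i s a = 0 → pol (i + 1) s a = 0)
    (hpKL : ∀ i < n2, avgKL P γ ρ0 (pol (i + 1)) (pol i) ≤ δ)
    (hpsurr : ∀ i < n2,
      Jret P γ ρ0 R (pol 0) ≤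
        Jret P γ ρ0 R (pol i) + (1 / (1 - γ)) * surrAdv P γ ρ0 R (pol i) (pol (i + 1)))
    (hpeps : ∀ i < n2, epsAdv P γ R (pol i) (pol (i + 1)) ≤ εR)
    (hlink : σ 0 = pol n2)
    (hσ0 : ∀ i ≤ n1, ∀ s a, 0 ≤ σ i s a)
    (hσ1 : ∀ i ≤ n1, ∀ s, ∑ a, σ i s a = 1)
    (hσabs : ∀ i < n1, ∀ s a, σ i s a = 0 → σ (i + 1) s a = 0)
    (hσKL : ∀ i < n1, avgKL P γ ρ0 (σ (i + 1)) (σ i) ≤ δ)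
    (hσA : ∀ i < n1, 0 ≤ surrAdv P γ ρ0 R (σ i) (σ (i + 1)))
    (hσeps : ∀ i < n1, epsAdv P γ R (σ i) (σ (i + 1)) ≤ εR) :
    Jret P γ ρ0 R (σ n1) - Jret P γ ρ0 R (pol 0) ≥
      - (Real.sqrt (2 * δ) * γ / (1 - γ) ^ 2) * ((n1 : ℝ) + (n2 : ℝ)) * εR := by
  set C : ℝ := Real.sqrt (2 * δ) * γ / (1 - γ) ^ 2 * εR with hC
  have hC0 : 0 ≤ C := by
    apply mul_nonneg _ hεR
    positivity
  -- min-cost stage: one step from pol 0's level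
  have hstep_p : ∀ i < n2, Jret P γ ρ0 R (pol 0) - C ≤ Jret P γ ρ0 R (pol (i + 1)) := by
    intro i hi
    have h := step_bound hP0 hP1 hγ0 hγ1 hρ0 hρ1 (hpol0 i hi.le) (hpol1 i hi.le) R
      (hpol0 (i + 1) (by omega)) (hpol1 (i + 1) (by omega)) (hpabs i hi) hδ.le hεR
      (hpKL i hi) (hpeps i hi)
    have h2 := hpsurr i hi
    rw [one_div] at h2
    rw [← hC] at h
    linarith
  -- max-reward stage: induction
  have hstep_s : ∀ i ≤ n1, Jret P γ ρ0 R (σ 0) - (i : ℝ) * C ≤ Jret P γ ρ0 R (σ i) := by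
    intro i
    induction i with
    | zero => intro _; simp
    | succ i ih =>
      intro hi
      have hi' : i ≤ n1 := by omega
      have hilt : i < n1 := by omega
      have h := step_bound hP0 hP1 hγ0 hγ1 hρ0 hρ1 (hσ0 i hi') (hσ1 i hi') R
        (hσ0 (i + 1) hi) (hσ1 (i + 1) hi) (hσabs i hilt) hδ.le hεR
        (hσKL i hilt) (hσeps i hilt)
      rw [← hC] at h
      have hA := hσA i hilt
      have hinv : (0:ℝ) ≤ (1 - γ)⁻¹ := by
        apply inv_nonneg.2
        linarith
      have hA' : 0 ≤ (1 - γ)⁻¹ * surrAdv P γ ρ0 R (σ i) (σ (i + 1)) := mul_nonneg hinv hA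
      have := ih hi'
      push_cast
      linarith
  have hfinal := hstep_s n1 le_rfl
  rw [hlink] at hfinal
  have hgoal : - (Real.sqrt (2 * δ) * γ / (1 - γ) ^ 2) * ((n1 : ℝ) + (n2 : ℝ)) * εR
      = -(((n1 : ℝ) + (n2 : ℝ)) * C) := by
    rw [hC]
    ring
  rw [ge_iff_le, hgoal]
  rcases Nat.eq_zero_or_pos n2 with h2 | h2
  · have hp : pol n2 = pol 0 := by rw [h2]
    rw [hp] at hfinal
    have : ((n2 : ℝ)) = 0 := by rw [h2]; norm_num
    rw [this]
    nlinarith [Nat.cast_nonneg (α := ℝ) n1]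
  · obtain ⟨m, rfl⟩ : ∃ m, n2 = m + 1 := ⟨n2 - 1, by omega⟩
    have hone := hstep_p m (by omega)
    have hm0 : (0:ℝ) ≤ (m : ℝ) := Nat.cast_nonneg m
    have hn10 : (0:ℝ) ≤ (n1 : ℝ) := Nat.cast_nonneg n1
    push_cast
    nlinarith
end

section
/- Interior-point suboptimality bound via stationarity (Theorem 5.1, convex-analytic form): let E be a real inner product space, f : E → ℝ concave on E (i.e., −f is convex on E), g : E → ℝ convex on E, and t > 0. Suppose x_I ∈ E satisfies g(x_I) < 0, f has gradient ∇f(x_I) at x_I, g has gradient ∇g(x_I) at x_I, and the stationarity condition ∇f(x_I) = (1/(t · (−g(x_I)))) • ∇g(x_I) holds (equivalently, x_I is a stationary point of x ↦ f(x) + log(−g(x))/t). Then for every x* ∈ E with g(x*) ≤ 0 such that f(x) ≤ f(x*) for all x with g(x) ≤ 0, we have 0 ≤ f(x*) − f(x_I) ≤ 1/t. -/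
open Set

lemma convex_grad_ineq {E : Type*} [NormedAddCommGroup E] [InnerProductSpace ℝ E]
    [CompleteSpace E] (g : E → ℝ) (hg : ConvexOn ℝ Set.univ g) (x grad : E)
    (hgrad : HasGradientAt g grad x) (y : E) :
    g x + inner ℝ grad (y - x) ≤ g y := by
  rcases eq_or_ne y x with rfl | hne
  · simp
  · set φ : ℝ → ℝ := fun s => g (x + s • (y - x)) with hφ
    have hconv : ConvexOn ℝ Set.univ φ := by
      have h := hg.comp_affineMap (AffineMap.lineMap x y)
      have heq : g ∘ (AffineMap.lineMap x y) = φ := by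
        funext s
        simp only [Function.comp_apply, AffineMap.lineMap_apply_module', φ]
        rw [add_comm]
      rw [heq] at h
      simpa using h
    have hcurve : HasDerivAt (fun s : ℝ => x + s • (y - x)) (y - x) 0 := by
      simpa using ((hasDerivAt_id (0:ℝ)).smul_const (y - x)).const_add x
    have hderiv : HasDerivAt φ (inner ℝ grad (y - x) : ℝ) 0 := by
      have hx0 : x + (0:ℝ) • (y - x) = x := by simp
      have hgd : HasFDerivAt g ((InnerProductSpace.toDual ℝ E) grad)
          (x + (0:ℝ) • (y - x)) := by
        rw [hx0]; exact hgrad.hasFDerivAt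
      have h := hgd.comp_hasDerivAt (0:ℝ) hcurve
      simp only [InnerProductSpace.toDual_apply_apply] at h; exact h
    have hslope := hconv.le_slope_of_hasDerivAt (mem_univ (0:ℝ)) (mem_univ (1:ℝ))
      zero_lt_one hderiv
    have : slope φ 0 1 = g y - g x := by
      simp [slope_def_field, φ]
    linarith [hslope.trans_eq this]

/-- interior-point suboptimality bound via stationarity
(Theorem 5.1, convex-analytic form). -/
theorem interior_point_suboptimality_stationarity
    {E : Type*} [NormedAddCommGroup E] [InnerProductSpace ℝ E] [CompleteSpace E]
    (f g : E → ℝ) (hf : ConcaveOn ℝ Set.univ f) (hg : ConvexOn ℝ Set.univ g)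
    (t : ℝ) (ht : 0 < t) (xI : E) (hgI : g xI < 0)
    (gradf gradg : E)
    (hgradf : HasGradientAt f gradf xI) (hgradg : HasGradientAt g gradg xI)
    (hstat : gradf = (1 / (t * (-g xI))) • gradg)
    (xstar : E) (hxstar : g xstar ≤ 0) (hopt : ∀ x, g x ≤ 0 → f x ≤ f xstar) :
    0 ≤ f xstar - f xI ∧ f xstar - f xI ≤ 1 / t := by
  have h0 : 0 ≤ f xstar - f xI := sub_nonneg.mpr (hopt xI hgI.le)
  refine ⟨h0, ?_⟩
  have hnegf : HasGradientAt (fun x => -f x) (-gradf) xI := by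
    have := hgradf.hasFDerivAt.neg
    rw [hasGradientAt_iff_hasFDerivAt]
    rw [map_neg]; exact this
  have hfineq := convex_grad_ineq (fun x => -f x) hf.neg xI (-gradf) hnegf xstar
  have hgineq := convex_grad_ineq g hg xI gradg hgradg xstar
  have ha : (0:ℝ) < -g xI := by linarith
  have hta : (0:ℝ) < t * (-g xI) := mul_pos ht ha
  have hinner : (inner ℝ gradf (xstar - xI) : ℝ)
      = (1 / (t * (-g xI))) * inner ℝ gradg (xstar - xI) := by
    rw [hstat, real_inner_smul_left]
  have h1 : f xstar - f xI ≤ (1 / (t * (-g xI))) * inner ℝ gradg (xstar - xI) := by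
    have : (inner ℝ (-gradf) (xstar - xI) : ℝ) = -inner ℝ gradf (xstar - xI) :=
      inner_neg_left _ _
    rw [this] at hfineq
    linarith [hinner ▸ (by linarith [hfineq] : f xstar - f xI ≤ (inner ℝ gradf (xstar - xI) : ℝ))]
  have h2 : (inner ℝ gradg (xstar - xI) : ℝ) ≤ -g xI := by linarith
  have h3 : (1 / (t * (-g xI))) * inner ℝ gradg (xstar - xI)
      ≤ (1 / (t * (-g xI))) * (-g xI) :=
    mul_le_mul_of_nonneg_left h2 (le_of_lt (by positivity))
  have h4 : (1 / (t * (-g xI))) * (-g xI) = 1 / t := by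
    field_simp
    exact div_self hgI.ne
  linarith
end
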